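/- arXiv:math/0606342 — 4 statements merged into one kernel-verified Lean document; each statement's English description precedes it below -/
import Mathlib

section
/- For every λ ∈ ℂ with λ ≠ 0 and every point p of the nonsingular fibre F_λ = {(z₁, z₂) ∈ ℂ × ℂ : z₁² + z₂² = λ}, the fundamental group of F_λ based at p is isomorphic (as a group) to ℤ. -/
open Complex Set unitInterval

noncomputable section

namespace Stmt5Winding

attribute [local instance] Path.Homotopic.setoid

/-- `L` is a continuous logarithm lift of the path `γ` in `ℂ`. -/
def IsLift {x y : ℂ} (γ : Path x y) (L : I → ℂ) : Prop :=
  Continuous L ∧ ∀ t, Complex.exp (L t) = γ t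

lemma slit_of_close {z : ℂ} (h : ‖z - 1‖ < 1) : z ∈ slitPlane := by
  rw [Complex.mem_slitPlane_iff]
  left
  have h1 : |(z - 1).re| ≤ ‖z - 1‖ := Complex.abs_re_le_norm _
  have : (z - 1).re = z.re - 1 := by simp
  rw [this] at h1
  have := abs_le.mp h1
  linarith [this.1, h]

/-- Every nonvanishing path in `ℂ` has a continuous logarithm. -/
theorem exists_lift {x y : ℂ} (γ : Path x y) (hγ : ∀ t, γ t ≠ 0) :
    ∃ L : I → ℂ, IsLift γ L := by
  have hne : ∀ s : ℝ, γ.extend s ≠ 0 := fun s => hγ _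
  -- minimum modulus
  obtain ⟨t₀, -, hmin'⟩ := (isCompact_univ : IsCompact (univ : Set I)).exists_isMinOn
    univ_nonempty ((continuous_norm.comp γ.continuous).continuousOn)
  have hmin : ∀ s : I, ‖γ t₀‖ ≤ ‖γ s‖ := fun s => hmin' (mem_univ s)
  set m : ℝ := ‖γ t₀‖ with hm_def
  have hm : 0 < m := norm_pos_iff.mpr (hγ t₀)
  have hmle : ∀ s : ℝ, m ≤ ‖γ.extend s‖ := fun s => hmin _
  -- uniform continuity of the extension
  have hUC : UniformContinuous γ.extend :=
    (CompactSpace.uniformContinuous_of_continuous γ.continuous).comp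
      (LipschitzWith.projIcc zero_le_one).uniformContinuous
  rcases Metric.uniformContinuous_iff.mp hUC m hm with ⟨δ, hδ, hδ'⟩
  obtain ⟨n, hn⟩ := exists_nat_one_div_lt hδ
  set N : ℕ := n + 1 with hN
  have hN0 : (0:ℝ) < N := by positivity
  have hNδ : 1 / (N:ℝ) < δ := by exact_mod_cast hn
  -- closeness of ratios
  have key : ∀ a b : ℝ, |a - b| ≤ 1 / N →
      ‖γ.extend a / γ.extend b - 1‖ < 1 := by
    intro a b hab
    have hd : dist (γ.extend a) (γ.extend b) < m :=
      hδ' (lt_of_le_of_lt (by simpa [Real.dist_eq] using hab) hNδ)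
    have hb : m ≤ ‖γ.extend b‖ := hmle b
    have hb0 : γ.extend b ≠ 0 := hne b
    have : γ.extend a / γ.extend b - 1 = (γ.extend a - γ.extend b) / γ.extend b := by
      field_simp
    rw [this, norm_div, div_lt_one (norm_pos_iff.mpr hb0)]
    calc ‖γ.extend a - γ.extend b‖ = dist (γ.extend a) (γ.extend b) := (dist_eq_norm _ _).symm
      _ < m := hd
      _ ≤ ‖γ.extend b‖ := hb
  have keyslit : ∀ a b : ℝ, |a - b| ≤ 1 / N →
      γ.extend a / γ.extend b ∈ slitPlane := fun a b hab => slit_of_close (key a b hab)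
  set c : ℕ → ℝ := fun k => (k : ℝ) / N with hc
  have hcd : ∀ k, |c (k + 1) - c k| = 1 / N := by
    intro k
    have : c (k+1) - c k = 1 / N := by
      simp only [hc]
      push_cast
      field_simp
      ring
    rw [this, abs_of_pos (by positivity)]
  have hmin_le : ∀ (t : I) (k : ℕ), |min (t:ℝ) (c (k+1)) - min (t:ℝ) (c k)| ≤ 1 / N := by
    intro t k
    calc |min (t:ℝ) (c (k+1)) - min (t:ℝ) (c k)|
        ≤ max |(t:ℝ) - (t:ℝ)| |c (k+1) - c k| := abs_min_sub_min_le_max _ _ _ _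
      _ ≤ 1 / N := by
          rw [sub_self, abs_zero, hcd k]
          simp [le_refl]
  refine ⟨fun t => Complex.log x +
    ∑ k ∈ Finset.range N, Complex.log
      (γ.extend (min (t:ℝ) (c (k+1))) / γ.extend (min (t:ℝ) (c k))), ?_, ?_⟩
  · -- continuity
    apply continuous_const.add
    apply continuous_finset_sum
    intro k _
    apply Continuous.clog
    · exact ((γ.continuous_extend.comp (continuous_subtype_val.min continuous_const)).div
        (γ.continuous_extend.comp (continuous_subtype_val.min continuous_const))
        (fun t => hne _))
    · intro t
      exact keyslit _ _ (hmin_le t k)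
  · -- lifting property
    intro t
    rw [Complex.exp_add, Complex.exp_sum]
    have hxne : x ≠ 0 := by
      have := hγ 0
      rwa [γ.source] at this
    rw [Complex.exp_log hxne]
    have : ∀ k ∈ Finset.range N,
        Complex.exp (Complex.log (γ.extend (min (t:ℝ) (c (k+1))) / γ.extend (min (t:ℝ) (c k))))
          = γ.extend (min (t:ℝ) (c (k+1))) / γ.extend (min (t:ℝ) (c k)) := by
      intro k _
      exact Complex.exp_log (div_ne_zero (hne _) (hne _))
    rw [Finset.prod_congr rfl this]
    -- telescoping product via units
    set u : ℕ → ℂˣ := fun k => Units.mk0 (γ.extend (min (t:ℝ) (c k))) (hne _) with hu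
    have hprod : ∏ k ∈ Finset.range N,
        (γ.extend (min (t:ℝ) (c (k+1))) / γ.extend (min (t:ℝ) (c k)))
        = ((∏ k ∈ Finset.range N, (u (k+1) / u k) : ℂˣ) : ℂ) := by
      have hmp := map_prod (Units.coeHom ℂ) (fun k => u (k+1) / u k) (Finset.range N)
      simp only [Units.coeHom_apply] at hmp
      rw [hmp]
      apply Finset.prod_congr rfl
      intro k _
      simp [hu]
    rw [hprod, Finset.prod_range_div]
    have hc0 : c 0 = 0 := by simp [hc]
    have hcN : c N = 1 := by
      simp only [hc]
      field_simp
    have ht0 : min (t:ℝ) (c 0) = 0 := by rw [hc0]; exact min_eq_right t.2.1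
    have htN : min (t:ℝ) (c N) = (t:ℝ) := by rw [hcN]; exact min_eq_left t.2.2
    have : ((u N / u 0 : ℂˣ) : ℂ) = γ.extend (t:ℝ) / γ.extend 0 := by
      simp only [hu, Units.val_div_eq_div_val, Units.val_mk0, ht0, htN]
    rw [this, Path.extend_zero]
    rw [γ.extend_apply ⟨t.2.1, t.2.2⟩]
    have : (⟨(t:ℝ), _⟩ : I) = t := Subtype.ext rfl
    rw [this]
    field_simp

/-- An integer-valued continuous function on `I` is constant. -/
lemma int_valued_eq {g : I → ℝ} (hc : Continuous g) (hint : ∀ t, ∃ k : ℤ, g t = k)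
    (a b : I) : g a = g b := by
  rcases lt_trichotomy (g a) (g b) with h | h | h
  · exfalso
    obtain ⟨pa, hpa⟩ := hint a
    obtain ⟨pb, hpb⟩ := hint b
    have hpq : pa < pb := by exact_mod_cast (hpa ▸ hpb ▸ h)
    have hmem : (pa:ℝ) + 1/2 ∈ Icc (g a) (g b) := by
      constructor
      · rw [hpa]; linarith
      · rw [hpb]
        have : (pa:ℝ) + 1 ≤ pb := by exact_mod_cast hpq
        linarith
    obtain ⟨t, ht⟩ := intermediate_value_univ a b hc hmem
    obtain ⟨r, hr⟩ := hint t
    rw [hr] at ht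
    have : (2 * r : ℝ) = 2 * pa + 1 := by linarith [ht]
    have h2 : ((2 * r : ℤ) : ℝ) = ((2 * pa + 1 : ℤ) : ℝ) := by push_cast; linarith
    have := Int.cast_injective (α := ℝ) h2
    omega
  · exact h
  · exfalso
    obtain ⟨pa, hpa⟩ := hint a
    obtain ⟨pb, hpb⟩ := hint b
    have hpq : pb < pa := by exact_mod_cast (hpa ▸ hpb ▸ h)
    have hmem : (pb:ℝ) + 1/2 ∈ Icc (g b) (g a) := by
      constructor
      · rw [hpb]; linarith
      · rw [hpa]
        have : (pb:ℝ) + 1 ≤ pa := by exact_mod_cast hpq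
        linarith
    obtain ⟨t, ht⟩ := intermediate_value_univ b a hc hmem
    obtain ⟨r, hr⟩ := hint t
    rw [hr] at ht
    have : (2 * r : ℝ) = 2 * pb + 1 := by linarith [ht]
    have h2 : ((2 * r : ℤ) : ℝ) = ((2 * pb + 1 : ℤ) : ℝ) := by push_cast; linarith
    have := Int.cast_injective (α := ℝ) h2
    omega

theorem lift_diff_const {x y : ℂ} (γ : Path x y) {L L' : I → ℂ}
    (hL : IsLift γ L) (hL' : IsLift γ L') : L 1 - L' 1 = L 0 - L' 0 := by
  set D : I → ℂ := fun t => L t - L' t with hD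
  have hexp : ∀ t, Complex.exp (D t) = 1 := by
    intro t
    rw [hD]
    simp only
    rw [Complex.exp_sub, hL.2, hL'.2, div_self]
    rw [← hL.2 t]
    exact Complex.exp_ne_zero _
  have hint : ∀ t, ∃ k : ℤ, D t = k * (2 * Real.pi * Complex.I) := by
    intro t
    exact Complex.exp_eq_one_iff.mp (hexp t)
  have hre : ∀ t, (D t).re = 0 := by
    intro t
    obtain ⟨k, hk⟩ := hint t
    rw [hk]
    simp
  have him : ∀ t, ∃ k : ℤ, (D t).im = k * (2 * Real.pi) := by
    intro t
    obtain ⟨k, hk⟩ := hint t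
    refine ⟨k, ?_⟩
    rw [hk]
    simp [Complex.mul_im]
    try ring
  set g : I → ℝ := fun t => (D t).im / (2 * Real.pi) with hg
  have hgc : Continuous g := by
    apply Continuous.div_const
    exact Complex.continuous_im.comp ((hL.1.sub hL'.1))
  have hgint : ∀ t, ∃ k : ℤ, g t = k := by
    intro t
    obtain ⟨k, hk⟩ := him t
    refine ⟨k, ?_⟩
    rw [hg]
    simp only
    rw [hk]
    field_simp
  have h01 : g 0 = g 1 := int_valued_eq hgc hgint 0 1
  have him01 : (D 0).im = (D 1).im := by
    have h2π : (2 * Real.pi) ≠ 0 := by positivity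
    have := h01
    rw [hg] at this
    simp only at this
    field_simp at this
    linarith [this]
  have hD01 : D 1 = D 0 := by
    apply Complex.ext
    · rw [hre, hre]
    · rw [← him01]
  calc L 1 - L' 1 = D 1 := rfl
    _ = D 0 := hD01
    _ = L 0 - L' 0 := rfl

/-- The total winding (in `ℂ`, a multiple of `2πi` for loops) of a nonvanishing path. -/
def wind {x y : ℂ} (γ : Path x y) (hγ : ∀ t, γ t ≠ 0) : ℂ :=
  (Classical.choose (exists_lift γ hγ)) 1 - (Classical.choose (exists_lift γ hγ)) 0

theorem wind_eq {x y : ℂ} (γ : Path x y) (hγ : ∀ t, γ t ≠ 0) {L : I → ℂ}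
    (hL : IsLift γ L) : wind γ hγ = L 1 - L 0 := by
  have h := Classical.choose_spec (exists_lift γ hγ)
  have := lift_diff_const γ h hL
  unfold wind
  linear_combination this

theorem wind_congr {x y : ℂ} {γ δ : Path x y} (h : γ = δ) (hγ : ∀ t, γ t ≠ 0)
    (hδ : ∀ t, δ t ≠ 0) : wind γ hγ = wind δ hδ := by subst h; rfl

theorem wind_slit {x y : ℂ} (γ : Path x y) (hγ : ∀ t, γ t ≠ 0)
    (hs : ∀ t, γ t ∈ Complex.slitPlane) :
    wind γ hγ = Complex.log y - Complex.log x := by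
  have hL : IsLift γ fun t => Complex.log (γ t) :=
    ⟨Continuous.clog γ.continuous hs, fun t => Complex.exp_log (hγ t)⟩
  rw [wind_eq γ hγ hL]
  simp

/-- Pointwise quotient of two paths in `ℂ`. -/
def divPath {x y x' y' : ℂ} (γ : Path x y) (δ : Path x' y') (hδ : ∀ t, δ t ≠ 0) :
    Path (x / x') (y / y') where
  toFun := fun t => γ t / δ t
  continuous_toFun := γ.continuous.div δ.continuous hδ
  source' := by simp
  target' := by simp

theorem wind_div {x y x' y' : ℂ} (γ : Path x y) (δ : Path x' y')
    (hγ : ∀ t, γ t ≠ 0) (hδ : ∀ t, δ t ≠ 0)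
    (hq : ∀ t, (divPath γ δ hδ) t ≠ 0) :
    wind (divPath γ δ hδ) hq = wind γ hγ - wind δ hδ := by
  obtain ⟨Lγ, hLγ⟩ := exists_lift γ hγ
  obtain ⟨Lδ, hLδ⟩ := exists_lift δ hδ
  have hL : IsLift (divPath γ δ hδ) fun t => Lγ t - Lδ t := by
    refine ⟨hLγ.1.sub hLδ.1, fun t => ?_⟩
    rw [Complex.exp_sub, hLγ.2, hLδ.2]
    rfl
  rw [wind_eq _ hq hL, wind_eq γ hγ hLγ, wind_eq δ hδ hLδ]
  ring

theorem wind_trans {x y z : ℂ} (γ : Path x y) (δ : Path y z)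
    (hγ : ∀ t, γ t ≠ 0) (hδ : ∀ t, δ t ≠ 0) (hts : ∀ t, (γ.trans δ) t ≠ 0) :
    wind (γ.trans δ) hts = wind γ hγ + wind δ hδ := by
  obtain ⟨Lγ, hLγ⟩ := exists_lift γ hγ
  obtain ⟨Lδ, hLδ⟩ := exists_lift δ hδ
  set cc : ℂ := Lγ 1 - Lδ 0 with hcc
  have hyne : y ≠ 0 := by have := hδ 0; rwa [δ.source] at this
  have hec : Complex.exp cc = 1 := by
    rw [hcc, Complex.exp_sub, hLγ.2, hLδ.2, Path.target, Path.source, div_self hyne]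
  set P : Path (Lγ 0) (Lγ 1) := ⟨⟨Lγ, hLγ.1⟩, rfl, rfl⟩ with hP
  set Q : Path (Lγ 1) (Lδ 1 + cc) := ⟨⟨fun t => Lδ t + cc, hLδ.1.add continuous_const⟩,
    by simp [hcc], rfl⟩ with hQ
  have hL : IsLift (γ.trans δ) (P.trans Q) := by
    refine ⟨(P.trans Q).continuous, fun t => ?_⟩
    rw [Path.trans_apply, Path.trans_apply]
    split_ifs with h
    · exact hLγ.2 _
    · show Complex.exp (Lδ _ + cc) = δ _
      rw [Complex.exp_add, hLδ.2, hec, mul_one]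
  rw [wind_eq _ hts hL, wind_eq γ hγ hLγ, wind_eq δ hδ hLδ]
  have h1 : (P.trans Q) 1 = Lδ 1 + cc := (P.trans Q).target
  have h0 : (P.trans Q) 0 = Lγ 0 := (P.trans Q).source
  rw [h1, h0, hcc]
  ring

theorem wind_refl (x : ℂ) (hx : ∀ t, (Path.refl x) t ≠ 0) : wind (Path.refl x) hx = 0 := by
  have hxne : x ≠ 0 := hx 0
  have hL : IsLift (Path.refl x) fun _ => Complex.log x :=
    ⟨continuous_const, fun t => Complex.exp_log hxne⟩
  rw [wind_eq _ hx hL]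
  ring

/-- Winding number is invariant under path homotopy through nonvanishing maps. -/
theorem wind_eq_of_homotopy {x y : ℂ} {γ δ : Path x y} (H : Path.Homotopy γ δ)
    (hH : ∀ q : I × I, H q ≠ 0) (hγ : ∀ t, γ t ≠ 0) (hδ : ∀ t, δ t ≠ 0) :
    wind γ hγ = wind δ hδ := by
  have hev : ∀ s t, (H.eval s) t = H (s, t) := fun s t => rfl
  have hne : ∀ s t, (H.eval s) t ≠ 0 := fun s t => by rw [hev]; exact hH _
  set g : I → ℂ := fun s => wind (H.eval s) (hne s) with hg
  have hxne : x ≠ 0 := by have := hγ 0; rwa [γ.source] at this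
  have hyne : y ≠ 0 := by have := hγ 1; rwa [γ.target] at this
  -- local constancy
  have hloc : ∀ s₀ : I, ∀ᶠ s in nhds s₀, g s = g s₀ := by
    intro s₀
    obtain ⟨q₀, -, hq₀'⟩ := (isCompact_univ : IsCompact (univ : Set (I × I))).exists_isMinOn
      univ_nonempty ((continuous_norm.comp H.continuous).continuousOn)
    set m : ℝ := ‖H q₀‖ with hm_def
    have hm : 0 < m := norm_pos_iff.mpr (hH q₀)
    have hmle : ∀ q : I × I, m ≤ ‖H q‖ := fun q => hq₀' (mem_univ q)
    have hUC : UniformContinuous (H : I × I → ℂ) :=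
      CompactSpace.uniformContinuous_of_continuous H.continuous
    rcases Metric.uniformContinuous_iff.mp hUC m hm with ⟨ε, hε, hε'⟩
    filter_upwards [Metric.ball_mem_nhds s₀ hε] with s hs
    -- the pointwise ratio lies in the slit plane
    have hslit : ∀ t, (H.eval s) t / (H.eval s₀) t ∈ Complex.slitPlane := by
      intro t
      apply slit_of_close
      have hdist : dist ((s, t) : I × I) (s₀, t) < ε := by
        rw [Prod.dist_eq]
        simp only [dist_self]
        rw [max_eq_left dist_nonneg]
        exact Metric.mem_ball.mp hs
      have hd : dist (H (s, t)) (H (s₀, t)) < m := hε' hdist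
      have hb0 : H (s₀, t) ≠ 0 := hH _
      rw [hev, hev]
      have hrw : H (s, t) / H (s₀, t) - 1 = (H (s, t) - H (s₀, t)) / H (s₀, t) := by
        field_simp
      rw [hrw, norm_div, div_lt_one (norm_pos_iff.mpr hb0)]
      calc ‖H (s, t) - H (s₀, t)‖ = dist (H (s, t)) (H (s₀, t)) := (dist_eq_norm _ _).symm
        _ < m := hd
        _ ≤ ‖H (s₀, t)‖ := hmle _
    -- hence the two winds agree
    have hq : ∀ t, (divPath (H.eval s) (H.eval s₀) (hne s₀)) t ≠ 0 := by
      intro t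
      exact div_ne_zero (hne s t) (hne s₀ t)
    have h1 := wind_div (H.eval s) (H.eval s₀) (hne s) (hne s₀) hq
    have h2 := wind_slit (divPath (H.eval s) (H.eval s₀) (hne s₀)) hq hslit
    have h3 : Complex.log (y / y) - Complex.log (x / x) = 0 := by
      rw [div_self hyne, div_self hxne, sub_self]
    have : wind (H.eval s) (hne s) - wind (H.eval s₀) (hne s₀) = 0 := by
      rw [← h1, h2, h3]
    have hgs : g s = g s₀ := by
      rw [hg]
      simp only
      linear_combination this
    exact hgs
  -- local constancy implies global constancy on the connected space I
  have hconst : ∀ s : I, g s = g 0 := by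
    have hS : IsClopen {s : I | g s = g 0} := by
      constructor
      · rw [← isOpen_compl_iff, isOpen_iff_mem_nhds]
        intro s hs
        filter_upwards [hloc s] with s' hs'
        simp only [mem_compl_iff, mem_setOf_eq] at hs ⊢
        rw [hs']
        exact hs
      · rw [isOpen_iff_mem_nhds]
        intro s hs
        filter_upwards [hloc s] with s' hs'
        simp only [mem_setOf_eq] at hs ⊢
        rw [hs', hs]
    rcases (isClopen_iff.mp hS) with h | h
    · exfalso
      have : (0 : I) ∈ {s : I | g s = g 0} := rfl
      rw [h] at this
      exact this
    · intro s
      have : s ∈ {s : I | g s = g 0} := by rw [h]; trivial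
      exact this
  have h10 : g 1 = g 0 := hconst 1
  have he0 : g 0 = wind γ hγ := by
    rw [hg]
    simp only
    exact wind_congr H.eval_zero (hne 0) hγ
  have he1 : g 1 = wind δ hδ := by
    rw [hg]
    simp only
    exact wind_congr H.eval_one (hne 1) hδ
  rw [← he0, ← he1, h10]

/-- For a nonvanishing loop the winding is an integer multiple of `2πi`. -/
theorem wind_loop_int {x : ℂ} (γ : Path x x) (hγ : ∀ t, γ t ≠ 0) :
    ∃ k : ℤ, wind γ hγ = k * (2 * Real.pi * Complex.I) := by
  obtain ⟨L, hL⟩ := exists_lift γ hγ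
  have : Complex.exp (wind γ hγ) = 1 := by
    rw [wind_eq γ hγ hL, Complex.exp_sub, hL.2, hL.2, Path.target, Path.source, div_self]
    have := hγ 0
    rwa [γ.source] at this
  exact Complex.exp_eq_one_iff.mp this

/-- The integer winding number of a nonvanishing loop in `ℂ`. -/
def windInt {x : ℂ} (γ : Path x x) (hγ : ∀ t, γ t ≠ 0) : ℤ :=
  Classical.choose (wind_loop_int γ hγ)

theorem windInt_spec {x : ℂ} (γ : Path x x) (hγ : ∀ t, γ t ≠ 0) :
    (windInt γ hγ : ℂ) * (2 * Real.pi * Complex.I) = wind γ hγ :=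
  (Classical.choose_spec (wind_loop_int γ hγ)).symm

theorem two_pi_I_ne_zero' : (2 * Real.pi * Complex.I : ℂ) ≠ 0 := by
  simp [Real.pi_ne_zero, Complex.I_ne_zero]

theorem windInt_eq_of_wind_eq {x : ℂ} {γ δ : Path x x} (hγ : ∀ t, γ t ≠ 0)
    (hδ : ∀ t, δ t ≠ 0) (h : wind γ hγ = wind δ hδ) : windInt γ hγ = windInt δ hδ := by
  have h1 := windInt_spec γ hγ
  have h2 := windInt_spec δ hδ
  rw [h] at h1
  have := mul_right_cancel₀ two_pi_I_ne_zero' (h1.trans h2.symm)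
  exact_mod_cast this

end Stmt5Winding

namespace Stmt5Fiber
open Stmt5Winding

variable {l : ℂ}

/-- First coordinate map to `ℂ*`: `(z₁,z₂) ↦ z₁ + i z₂`. -/
def ff (q : ↥{q : ℂ × ℂ | q.1 ^ 2 + q.2 ^ 2 = l}) : ℂ := q.1.1 + Complex.I * q.1.2

lemma ff_cont : Continuous (ff (l := l)) := by
  unfold ff
  fun_prop

lemma key_mul (q : ↥{q : ℂ × ℂ | q.1 ^ 2 + q.2 ^ 2 = l}) :
    ff q * (q.1.1 - Complex.I * q.1.2) = l := by
  have hq : q.1.1 ^ 2 + q.1.2 ^ 2 = l := q.2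
  unfold ff
  linear_combination hq + (-(q.1.2 ^ 2)) * Complex.I_sq

lemma ff_ne (hl : l ≠ 0) (q : ↥{q : ℂ × ℂ | q.1 ^ 2 + q.2 ^ 2 = l}) : ff q ≠ 0 := by
  intro h
  apply hl
  rw [← key_mul q, h, zero_mul]

/-- Inverse parametrization `w ↦ ((e^w + l e^{-w})/2, (e^w - l e^{-w})/(2i))`. -/
def gg (l : ℂ) (w : ℂ) : ↥{q : ℂ × ℂ | q.1 ^ 2 + q.2 ^ 2 = l} :=
  ⟨((Complex.exp w + l * Complex.exp (-w)) / 2,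
    (Complex.exp w - l * Complex.exp (-w)) / (2 * Complex.I)), by
    have hEF : Complex.exp w * Complex.exp (-w) = 1 := by
      rw [← Complex.exp_add]; simp
    show ((Complex.exp w + l * Complex.exp (-w)) / 2) ^ 2 +
      ((Complex.exp w - l * Complex.exp (-w)) / (2 * Complex.I)) ^ 2 = l
    have h4 : ((2:ℂ) * Complex.I)^2 = -4 := by
      rw [mul_pow, Complex.I_sq]; ring
    rw [div_pow, div_pow, h4]
    linear_combination l * hEF⟩

lemma gg_cont : Continuous (gg l) := by
  apply Continuous.subtype_mk
  fun_prop

lemma f_g (w : ℂ) : ff (gg l w) = Complex.exp w := by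
  unfold ff gg
  simp only
  field_simp [Complex.I_ne_zero]
  ring

lemma g_eq (q : ↥{q : ℂ × ℂ | q.1 ^ 2 + q.2 ^ 2 = l}) (w : ℂ)
    (h : Complex.exp w = ff q) : gg l w = q := by
  have hEne : ff q ≠ 0 := by rw [← h]; exact Complex.exp_ne_zero w
  have hml : l * (ff q)⁻¹ = q.1.1 - Complex.I * q.1.2 := by
    have hk := key_mul q
    field_simp
    linear_combination -hk
  apply Subtype.ext
  apply Prod.ext
  · show (Complex.exp w + l * Complex.exp (-w)) / 2 = q.1.1
    rw [Complex.exp_neg, h, hml]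
    unfold ff
    ring
  · show (Complex.exp w - l * Complex.exp (-w)) / (2 * Complex.I) = q.1.2
    rw [Complex.exp_neg, h, hml]
    unfold ff
    field_simp
    ring

end Stmt5Fiber
namespace Stmt5Main
open Stmt5Winding Stmt5Fiber CategoryTheory

attribute [local instance] Path.Homotopic.setoid

variable {l : ℂ}

/-- Winding number of a loop in the fibre. -/
def wloop (hl : l ≠ 0) {p : ↥{q : ℂ × ℂ | q.1 ^ 2 + q.2 ^ 2 = l}} (γ : Path p p) : ℤ :=
  windInt (γ.map ff_cont) (fun t => ff_ne hl (γ t))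

lemma wloop_congr (hl : l ≠ 0) {p : ↥{q : ℂ × ℂ | q.1 ^ 2 + q.2 ^ 2 = l}}
    {γ δ : Path p p} (h : Path.Homotopic γ δ) : wloop hl γ = wloop hl δ := by
  obtain ⟨H⟩ := h
  have H' := H.map ⟨ff, ff_cont⟩
  have hH' : ∀ q : I × I, (H.map ⟨ff, ff_cont⟩) q ≠ 0 := fun q => ff_ne hl (H q)
  exact windInt_eq_of_wind_eq _ _
    (wind_eq_of_homotopy (H.map ⟨ff, ff_cont⟩) hH' _ _)

lemma wloop_trans (hl : l ≠ 0) {p : ↥{q : ℂ × ℂ | q.1 ^ 2 + q.2 ^ 2 = l}}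
    (γ δ : Path p p) : wloop hl (γ.trans δ) = wloop hl γ + wloop hl δ := by
  have hmap : (γ.trans δ).map ff_cont = (γ.map ff_cont).trans (δ.map ff_cont) :=
    Path.map_trans γ δ ff_cont
  have h1 : (wloop hl (γ.trans δ) : ℂ) * (2 * Real.pi * Complex.I)
      = ((wloop hl γ : ℂ) + (wloop hl δ : ℂ)) * (2 * Real.pi * Complex.I) := by
    have hts : ∀ t, ((γ.map ff_cont).trans (δ.map ff_cont)) t ≠ 0 := by
      intro t
      rw [← hmap]
      exact ff_ne hl _
    rw [wloop]; erw [windInt_spec]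
    rw [wind_congr hmap (fun t => ff_ne hl _) hts]
    rw [wind_trans (γ.map ff_cont) (δ.map ff_cont) (fun t => ff_ne hl (γ t))
      (fun t => ff_ne hl (δ t)) hts]
    rw [← windInt_spec (γ.map ff_cont) (fun t => ff_ne hl (γ t)),
      ← windInt_spec (δ.map ff_cont) (fun t => ff_ne hl (δ t))]
    rw [wloop, wloop]
    ring
  have := mul_right_cancel₀ two_pi_I_ne_zero' h1
  exact_mod_cast this

lemma wloop_refl (hl : l ≠ 0) (p : ↥{q : ℂ × ℂ | q.1 ^ 2 + q.2 ^ 2 = l}) :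
    wloop hl (Path.refl p) = 0 := by
  have hmap : (Path.refl p).map (ff_cont) = Path.refl (ff p) := by
    ext t
    rfl
  have h1 : (wloop hl (Path.refl p) : ℂ) * (2 * Real.pi * Complex.I) = 0 := by
    rw [wloop]; erw [windInt_spec]
    rw [wind_congr hmap (fun t => ff_ne hl _) (fun t => ff_ne hl p)]
    exact wind_refl _ _
  have h0 : (wloop hl (Path.refl p) : ℂ) = 0 := by
    rcases mul_eq_zero.mp h1 with h | h
    · exact h
    · exact absurd h two_pi_I_ne_zero'
  exact_mod_cast h0

lemma wloop_zero_homotopic (hl : l ≠ 0) {p : ↥{q : ℂ × ℂ | q.1 ^ 2 + q.2 ^ 2 = l}}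
    (γ : Path p p) (h : wloop hl γ = 0) : Path.Homotopic γ (Path.refl p) := by
  set hne : ∀ t, (γ.map (ff_cont (l := l))) t ≠ 0 := fun t => ff_ne hl (γ t) with hhne
  have hw : wind (γ.map ff_cont) hne = 0 := by
    rw [← windInt_spec]
    rw [show windInt (γ.map ff_cont) hne = wloop hl γ from rfl, h]
    simp
  obtain ⟨L, hL⟩ := exists_lift (γ.map ff_cont) hne
  have h10 : L 1 = L 0 := by
    have := wind_eq _ hne hL
    rw [hw] at this
    linear_combination -this
  set P : Path (L 0) (L 0) := ⟨⟨L, hL.1⟩, rfl, h10⟩ with hP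
  obtain ⟨K⟩ := SimplyConnectedSpace.paths_homotopic P (Path.refl (L 0))
  have hgL : ∀ t : I, gg l (L t) = γ t := fun t => g_eq (γ t) (L t) (hL.2 t)
  have hgp : gg l (L 0) = p := by rw [hgL 0, γ.source]
  constructor
  refine ⟨⟨⟨fun st => gg l (K st), gg_cont.comp K.continuous⟩, ?_, ?_⟩, ?_⟩
  · intro t
    show gg l (K (0, t)) = γ t
    rw [K.apply_zero]
    exact hgL t
  · intro t
    show gg l (K (1, t)) = (Path.refl p) t
    rw [K.apply_one]
    show gg l (L 0) = p
    exact hgp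
  · intro s t ht
    simp only [Set.mem_insert_iff, Set.mem_singleton_iff] at ht
    rcases ht with rfl | rfl
    · show gg l (K (s, 0)) = γ 0
      rw [K.source]
      show gg l (L 0) = γ 0
      rw [hgp, γ.source]
    · show gg l (K (s, 1)) = γ 1
      rw [K.target]
      show gg l (L 0) = γ 1
      rw [hgp, γ.target]

/-- The basic loop of winding number `m` in the fibre. -/
def loopN (hl : l ≠ 0) (p : ↥{q : ℂ × ℂ | q.1 ^ 2 + q.2 ^ 2 = l}) (m : ℤ) : Path p p where
  toFun := fun t =>
    gg l (Complex.log (ff p) + 2 * Real.pi * Complex.I * m * ((t : ℝ) : ℂ))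
  continuous_toFun := by
    apply gg_cont.comp
    fun_prop
  source' := by
    show gg l (Complex.log (ff p) + 2 * Real.pi * Complex.I * m * (((0:I) : ℝ) : ℂ)) = p
    have h0 : (((0:I) : ℝ) : ℂ) = 0 := by norm_num
    rw [h0, mul_zero, add_zero]
    exact g_eq p _ (Complex.exp_log (ff_ne hl p))
  target' := by
    show gg l (Complex.log (ff p) + 2 * Real.pi * Complex.I * m * (((1:I) : ℝ) : ℂ)) = p
    have h1 : (((1:I) : ℝ) : ℂ) = 1 := by norm_num
    rw [h1, mul_one]
    apply g_eq p
    rw [Complex.exp_add, Complex.exp_log (ff_ne hl p)]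
    have : (2 * (Real.pi:ℂ) * Complex.I * (m:ℂ)) = (m:ℂ) * (2 * (Real.pi:ℂ) * Complex.I) := by
      ring
    rw [this, Complex.exp_int_mul_two_pi_mul_I, mul_one]

lemma wloop_loopN (hl : l ≠ 0) (p : ↥{q : ℂ × ℂ | q.1 ^ 2 + q.2 ^ 2 = l}) (m : ℤ) :
    wloop hl (loopN hl p m) = m := by
  set L : I → ℂ := fun t =>
    Complex.log (ff p) + 2 * Real.pi * Complex.I * m * ((t : ℝ) : ℂ) with hLdef
  have hL : IsLift ((loopN hl p m).map ff_cont) L := by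
    constructor
    · rw [hLdef]; fun_prop
    · intro t
      show Complex.exp (L t) = ff ((loopN hl p m) t)
      show Complex.exp (L t) = ff (gg l (L t))
      rw [f_g]
  have h1 : (wloop hl (loopN hl p m) : ℂ) * (2 * Real.pi * Complex.I)
      = (m : ℂ) * (2 * Real.pi * Complex.I) := by
    rw [wloop]; erw [windInt_spec]; erw [wind_eq _ _ hL]
    rw [hLdef]
    simp only
    push_cast
    ring
  have := mul_right_cancel₀ two_pi_I_ne_zero' h1
  exact_mod_cast this

end Stmt5Main
namespace Stmt5Main
open Stmt5Winding Stmt5Fiber CategoryTheory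

attribute [local instance] Path.Homotopic.setoid

variable {l : ℂ}

/-- Winding number on homotopy classes of loops. -/
def W (hl : l ≠ 0) (p : ↥{q : ℂ × ℂ | q.1 ^ 2 + q.2 ^ 2 = l}) :
    Path.Homotopic.Quotient p p → ℤ :=
  Quotient.lift (wloop hl) (fun _ _ h => wloop_congr hl h)

/-- The winding-number homomorphism on the fundamental group of the fibre. -/
def Φ (hl : l ≠ 0) (p : ↥{q : ℂ × ℂ | q.1 ^ 2 + q.2 ^ 2 = l}) :
    FundamentalGroup ↥{q : ℂ × ℂ | q.1 ^ 2 + q.2 ^ 2 = l} p →* Multiplicative ℤ where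
  toFun a := Multiplicative.ofAdd (W hl p (FundamentalGroup.toPath a))
  map_one' := by
    show Multiplicative.ofAdd (W hl p (𝟙 (FundamentalGroupoid.mk p))) = 1
    have h1 : (𝟙 (FundamentalGroupoid.mk p) :
        FundamentalGroupoid.mk p ⟶ FundamentalGroupoid.mk p) = ⟦Path.refl p⟧ := rfl
    rw [h1]
    show Multiplicative.ofAdd (wloop hl (Path.refl p)) = 1
    rw [wloop_refl hl p]
    rfl
  map_mul' a b := by
    obtain ⟨γ, hγ⟩ := Quotient.exists_rep (FundamentalGroup.toPath a)
    obtain ⟨δ, hδ⟩ := Quotient.exists_rep (FundamentalGroup.toPath b)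
    have hab : FundamentalGroup.toPath (a * b) = Path.Homotopic.Quotient.trans (FundamentalGroup.toPath b) (FundamentalGroup.toPath a) := rfl
    show Multiplicative.ofAdd (W hl p (FundamentalGroup.toPath (a * b)))
        = Multiplicative.ofAdd (W hl p (FundamentalGroup.toPath a)) * Multiplicative.ofAdd (W hl p (FundamentalGroup.toPath b))
    rw [hab, ← hγ, ← hδ]
    show Multiplicative.ofAdd (wloop hl (δ.trans γ))
        = Multiplicative.ofAdd (wloop hl γ) * Multiplicative.ofAdd (wloop hl δ)
    rw [wloop_trans, ← ofAdd_add, add_comm]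

theorem main (hl : l ≠ 0) (p : ↥{q : ℂ × ℂ | q.1 ^ 2 + q.2 ^ 2 = l}) :
    Nonempty
      (FundamentalGroup ↥{q : ℂ × ℂ | q.1 ^ 2 + q.2 ^ 2 = l} p ≃* Multiplicative ℤ) := by
  refine ⟨MulEquiv.ofBijective (Φ hl p) ⟨?_, ?_⟩⟩
  · rw [injective_iff_map_eq_one]
    intro a ha
    obtain ⟨γ, hγ⟩ := Quotient.exists_rep (FundamentalGroup.toPath a)
    have h0 : wloop hl γ = 0 := by
      have h1 : Multiplicative.ofAdd (W hl p (FundamentalGroup.toPath a)) = 1 := ha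
      rw [← hγ] at h1
      have h2 : W hl p ⟦γ⟧ = 0 := by
        rwa [ofAdd_eq_one] at h1
      exact h2
    have hhom := wloop_zero_homotopic hl γ h0
    have hid : FundamentalGroup.toPath a = 𝟙 (FundamentalGroupoid.mk p) := by
      rw [← hγ]
      exact Quotient.sound hhom
    exact hid
  · intro x
    refine ⟨FundamentalGroup.fromPath ⟦loopN hl p x.toAdd⟧, ?_⟩
    show Multiplicative.ofAdd
      (W hl p (FundamentalGroup.toPath (FundamentalGroup.fromPath ⟦loopN hl p x.toAdd⟧))) = x
    have hh : FundamentalGroup.toPath (FundamentalGroup.fromPath ⟦loopN hl p x.toAdd⟧)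
        = ⟦loopN hl p x.toAdd⟧ := rfl
    rw [hh]
    show Multiplicative.ofAdd (wloop hl (loopN hl p x.toAdd)) = x
    rw [wloop_loopN]
    exact ofAdd_toAdd x

end Stmt5Main

end

/-- Proposition 5.2.3(2), π₁-version: for `λ ≠ 0`, the fundamental group of the
nonsingular fibre `F_λ = {(z₁,z₂) : z₁² + z₂² = λ}` at any basepoint is
infinite cyclic, i.e. isomorphic to `ℤ`. -/
theorem stmt5 (l : ℂ) (hl : l ≠ 0)
    (p : {q : ℂ × ℂ | q.1 ^ 2 + q.2 ^ 2 = l}) :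
    Nonempty
      (FundamentalGroup {q : ℂ × ℂ | q.1 ^ 2 + q.2 ^ 2 = l} p ≃* Multiplicative ℤ) := by
  exact Stmt5Main.main hl p
end

section
/- For every m ≥ 1 and every λ ∈ ℂ with λ ≠ 0, the complex quadric Q_λ = {z ∈ Fin m → ℂ : ∑_i z_i² = λ} is homeomorphic to the total space of the tangent bundle of the unit (m−1)-sphere realized as the subspace {(u, v) ∈ ℝ^m × ℝ^m : ‖u‖ = 1 and ⟨u, v⟩ = 0} of ℝ^m × ℝ^m (with the Euclidean norm and inner product). -/
open Finset

noncomputable section Stmt6Aux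

abbrev E (m : ℕ) := EuclideanSpace ℝ (Fin m)

def Xr (m : ℕ) (z : Fin m → ℂ) : E m := WithLp.toLp 2 (fun i => (z i).re)
def Yr (m : ℕ) (z : Fin m → ℂ) : E m := WithLp.toLp 2 (fun i => (z i).im)

lemma norm_sq_eq (m : ℕ) (u : E m) : ‖u‖ ^ 2 = ∑ i, u i ^ 2 := by
  rw [EuclideanSpace.norm_eq, Real.sq_sqrt (by positivity)]
  simp [sq_abs]

lemma inner_eq (m : ℕ) (u v : E m) : (inner ℝ u v : ℝ) = ∑ i, u i * v i := by
  simp [PiLp.inner_apply, RCLike.inner_apply]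
  exact Finset.sum_congr rfl fun _ _ => mul_comm _ _

lemma mem_iff (m : ℕ) (z : Fin m → ℂ) :
    (∑ i, z i ^ 2 = 1) ↔
      (∑ i, (z i).re ^ 2 = 1 + ∑ i, (z i).im ^ 2 ∧ ∑ i, (z i).re * (z i).im = 0) := by
  rw [Complex.ext_iff]
  simp only [Complex.re_sum, Complex.im_sum, pow_two, Complex.mul_re, Complex.mul_im,
    Complex.one_re, Complex.one_im]
  have e1 : ∑ i, ((z i).re * (z i).re - (z i).im * (z i).im)
      = ∑ i, (z i).re * (z i).re - ∑ i, (z i).im * (z i).im := Finset.sum_sub_distrib _ _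
  have e2 : ∑ i, ((z i).re * (z i).im + (z i).im * (z i).re)
      = 2 * ∑ i, (z i).re * (z i).im := by
    rw [Finset.mul_sum]; apply Finset.sum_congr rfl; intros; ring
  rw [e1, e2]
  constructor
  · rintro ⟨h1, h2⟩
    constructor
    · nlinarith [h1]
    · linarith
  · rintro ⟨h1, h2⟩
    constructor
    · nlinarith [h1]
    · linarith

lemma stmt6_main (m : ℕ) :
    Nonempty (({z : Fin m → ℂ | ∑ i, z i ^ 2 = 1} : Set (Fin m → ℂ)) ≃ₜ
      {uv : E m × E m | ‖uv.1‖ = 1 ∧ inner ℝ uv.1 uv.2 = (0 : ℝ)}) := by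
  -- basic facts
  have hXsq : ∀ z : Fin m → ℂ, ‖Xr m z‖ ^ 2 = ∑ i, (z i).re ^ 2 := fun z => by
    rw [norm_sq_eq]; rfl
  have hYsq : ∀ z : Fin m → ℂ, ‖Yr m z‖ ^ 2 = ∑ i, (z i).im ^ 2 := fun z => by
    rw [norm_sq_eq]; rfl
  have hnormX : ∀ z : Fin m → ℂ, (∑ i, z i ^ 2 = 1) →
      ‖Xr m z‖ = Real.sqrt (1 + ‖Yr m z‖ ^ 2) := by
    intro z hz
    have h := (mem_iff m z).1 hz
    have h2 : ‖Xr m z‖ ^ 2 = 1 + ‖Yr m z‖ ^ 2 := by rw [hXsq, hYsq, h.1]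
    rw [← h2, Real.sqrt_sq (norm_nonneg _)]
  have hXpos : ∀ z : Fin m → ℂ, (∑ i, z i ^ 2 = 1) → 0 < ‖Xr m z‖ := by
    intro z hz
    rw [hnormX z hz]
    have : (0:ℝ) < 1 + ‖Yr m z‖ ^ 2 := by positivity
    exact Real.sqrt_pos.2 this
  constructor
  refine Homeomorph.mk (Equiv.mk
    (fun z => ⟨(‖Xr m z.1‖⁻¹ • Xr m z.1, Yr m z.1), ?_, ?_⟩)
    (fun p => ⟨fun i => (↑(Real.sqrt (1 + ‖p.1.2‖ ^ 2) * p.1.1 i) + ↑(p.1.2 i) * Complex.I), ?_⟩)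
    ?_ ?_) ?_ ?_
  · -- norm of first component = 1
    rw [norm_smul, Real.norm_eq_abs, abs_of_pos (inv_pos.2 (hXpos z.1 z.2)),
      inv_mul_cancel₀ (ne_of_gt (hXpos z.1 z.2))]
  · -- inner = 0
    rw [real_inner_smul_left, inner_eq]
    have h := (mem_iff m z.1).1 z.2
    have : ∑ i, Xr m z.1 i * Yr m z.1 i = 0 := h.2
    rw [this, mul_zero]
  · -- backward membership
    obtain ⟨⟨u, v⟩, h1, h2⟩ := p
    set s := Real.sqrt (1 + ‖v‖ ^ 2) with hs
    have hs2 : s ^ 2 = 1 + ‖v‖ ^ 2 := Real.sq_sqrt (by positivity)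
    have hu2 : ∑ i, u i ^ 2 = 1 := by rw [← norm_sq_eq, h1]; norm_num
    have hv2 : ∑ i, v i ^ 2 = ‖v‖ ^ 2 := (norm_sq_eq m v).symm
    have huv : ∑ i, u i * v i = 0 := by rw [← inner_eq]; exact h2
    rw [Set.mem_setOf_eq, mem_iff]
    constructor
    · simp only [Complex.add_re, Complex.ofReal_re, Complex.mul_re, Complex.I_re,
        Complex.ofReal_im, Complex.I_im, Complex.add_im, Complex.ofReal_im,
        Complex.mul_im]
      have : ∑ i, (s * u i) ^ 2 = s ^ 2 * ∑ i, u i ^ 2 := by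
        rw [Finset.mul_sum]; apply Finset.sum_congr rfl; intros; ring
      simp only [mul_zero, zero_mul, sub_zero, add_zero, zero_add, mul_one]
      calc ∑ i, (s * u i) ^ 2 = s ^ 2 * ∑ i, u i ^ 2 := this
        _ = 1 + ∑ i, v i ^ 2 := by rw [hu2, mul_one, hs2, hv2]
    · simp only [Complex.add_re, Complex.ofReal_re, Complex.mul_re, Complex.I_re,
        Complex.ofReal_im, Complex.I_im, Complex.add_im, Complex.mul_im]
      simp only [mul_zero, zero_mul, sub_zero, add_zero, zero_add, mul_one]
      calc ∑ i, (s * u i) * v i = s * ∑ i, u i * v i := by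
            rw [Finset.mul_sum]; apply Finset.sum_congr rfl; intros; ring
        _ = 0 := by rw [huv, mul_zero]
  · -- left inverse
    rintro ⟨z, hz⟩
    apply Subtype.ext
    funext i
    apply Complex.ext
    · simp only [Complex.add_re, Complex.ofReal_re, Complex.mul_re, Complex.I_re,
        Complex.ofReal_im, Complex.I_im]
      have hnz := ne_of_gt (hXpos z hz)
      have hsq : Real.sqrt (1 + ‖Yr m z‖ ^ 2) = ‖Xr m z‖ := (hnormX z hz).symm
      rw [hsq]
      simp only [PiLp.smul_apply, smul_eq_mul, mul_zero, zero_mul, sub_zero, add_zero,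
        mul_one, sub_self, Xr]
      exact mul_inv_cancel_left₀ hnz _
    · simp [Complex.add_im, Complex.ofReal_im, Complex.mul_im]
      rfl
  · -- right inverse
    rintro ⟨⟨u, v⟩, h1, h2⟩
    set s := Real.sqrt (1 + ‖v‖ ^ 2) with hs
    have hspos : 0 < s := Real.sqrt_pos.2 (by positivity)
    apply Subtype.ext
    have hX : Xr m (fun i => (↑(s * u i) + ↑(v i) * Complex.I)) = s • u := by
      ext i
      show (((s * u i : ℝ) : ℂ) + (v i : ℂ) * Complex.I).re = s * u i
      simp
    have hY : Yr m (fun i => (↑(s * u i) + ↑(v i) * Complex.I)) = v := by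
      ext i
      show (((s * u i : ℝ) : ℂ) + (v i : ℂ) * Complex.I).im = v i
      simp
    have hnorm : ‖Xr m (fun i => (↑(s * u i) + ↑(v i) * Complex.I))‖ = s := by
      rw [hX, norm_smul, Real.norm_eq_abs, abs_of_pos hspos, h1, mul_one]
    refine Prod.ext ?_ ?_
    · show ‖Xr m _‖⁻¹ • Xr m _ = u
      rw [hnorm, hX, smul_smul, inv_mul_cancel₀ (ne_of_gt hspos), one_smul]
    · exact hY
  · -- continuity forward
    have hX : Continuous (Xr m) :=
      (PiLp.continuous_toLp 2 _).comp
        (continuous_pi fun i => Complex.continuous_re.comp (continuous_apply i))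
    have hY : Continuous (Yr m) :=
      (PiLp.continuous_toLp 2 _).comp
        (continuous_pi fun i => Complex.continuous_im.comp (continuous_apply i))
    have hXs : Continuous fun z : {z : Fin m → ℂ | ∑ i, z i ^ 2 = 1} => Xr m z.1 :=
      hX.comp continuous_subtype_val
    have hYs : Continuous fun z : {z : Fin m → ℂ | ∑ i, z i ^ 2 = 1} => Yr m z.1 :=
      hY.comp continuous_subtype_val
    have hn : Continuous fun z : {z : Fin m → ℂ | ∑ i, z i ^ 2 = 1} => ‖Xr m z.1‖ :=
      hXs.norm
    exact Continuous.subtype_mk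
      (((hn.inv₀ fun z => ne_of_gt (hXpos z.1 z.2)).smul hXs).prodMk hYs) _
  · -- continuity backward
    apply Continuous.subtype_mk
    apply continuous_pi
    intro i
    have hu : Continuous fun p : {uv : E m × E m | ‖uv.1‖ = 1 ∧ inner ℝ uv.1 uv.2 = (0:ℝ)} =>
        p.1.1 i := (PiLp.continuous_apply 2 _ i).comp (continuous_fst.comp continuous_subtype_val)
    have hv : Continuous fun p : {uv : E m × E m | ‖uv.1‖ = 1 ∧ inner ℝ uv.1 uv.2 = (0:ℝ)} =>
        p.1.2 i := (PiLp.continuous_apply 2 _ i).comp (continuous_snd.comp continuous_subtype_val)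
    have hs : Continuous fun p : {uv : E m × E m | ‖uv.1‖ = 1 ∧ inner ℝ uv.1 uv.2 = (0:ℝ)} =>
        Real.sqrt (1 + ‖p.1.2‖ ^ 2) :=
      Real.continuous_sqrt.comp
        (continuous_const.add (((continuous_snd.comp continuous_subtype_val).norm).pow 2))
    exact (Complex.continuous_ofReal.comp (hs.mul hu)).add
      ((Complex.continuous_ofReal.comp hv).mul continuous_const)

end Stmt6Aux

/-- §5.1.5: for `λ ≠ 0` the nonsingular complex quadric
`Q_λ = {z ∈ ℂ^m : ∑ z_i² = λ}` is homeomorphic to the total space of the tangent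
bundle of the unit `(m−1)`-sphere, realized as
`{(u,v) ∈ ℝ^m × ℝ^m : ‖u‖ = 1, ⟨u,v⟩ = 0}`. -/
theorem stmt6 (m : ℕ) (hm : 1 ≤ m) (l : ℂ) (hl : l ≠ 0) :
    Nonempty
      (({z : Fin m → ℂ | ∑ i, z i ^ 2 = l} : Set (Fin m → ℂ)) ≃ₜ
        {uv : EuclideanSpace ℝ (Fin m) × EuclideanSpace ℝ (Fin m) |
          ‖uv.1‖ = 1 ∧ inner ℝ uv.1 uv.2 = (0 : ℝ)}) := by
  obtain ⟨μ, hμ2⟩ := IsAlgClosed.exists_pow_nat_eq l (n := 2) two_pos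
  have hμ : μ ≠ 0 := by
    rintro rfl
    rw [← hμ2] at hl
    simp at hl
  obtain ⟨e⟩ := stmt6_main m
  have hscale : ∀ z : Fin m → ℂ,
      z ∈ {z : Fin m → ℂ | ∑ i, z i ^ 2 = l} ↔
        (Homeomorph.smulOfNeZero μ hμ).symm z ∈ {z : Fin m → ℂ | ∑ i, z i ^ 2 = 1} := by
    intro z
    show (∑ i, z i ^ 2 = l) ↔ (∑ i, (μ⁻¹ • z) i ^ 2 = 1)
    simp only [Pi.smul_apply, smul_eq_mul, mul_pow, ← Finset.mul_sum]
    constructor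
    · intro h
      rw [h, ← hμ2]
      field_simp
    · intro h
      have : (μ ^ 2) * ((μ⁻¹) ^ 2 * ∑ i, z i ^ 2) = μ ^ 2 * 1 := by rw [h]
      rw [mul_one, ← mul_assoc] at this
      field_simp at this
      rw [this, hμ2]
  exact ⟨(((Homeomorph.smulOfNeZero μ hμ).symm).subtype hscale).trans e⟩
end

section
/- For every m ≥ 1 and every λ ∈ ℂ with λ ≠ 0, the complex quadric Q_λ = {z ∈ Fin m → ℂ : ∑_i z_i² = λ} is homotopy equivalent to the unit sphere {x ∈ EuclideanSpace ℝ (Fin m) : ‖x‖ = 1}. -/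
noncomputable section Stmt7Aux

open Finset

namespace Stmt7Aux

variable {m : ℕ}

def A (z : Fin m → ℂ) : ℝ := ∑ i, (z i).re ^ 2
def B (z : Fin m → ℂ) : ℝ := ∑ i, (z i).im ^ 2

lemma B_nonneg (z : Fin m → ℂ) : 0 ≤ B z := Finset.sum_nonneg fun i _ => sq_nonneg _

lemma continuous_A : Continuous (A (m := m)) :=
  continuous_finset_sum _ fun i _ =>
    ((Complex.continuous_re.comp (continuous_apply i)).pow 2)

lemma continuous_B : Continuous (B (m := m)) :=
  continuous_finset_sum _ fun i _ =>
    ((Complex.continuous_im.comp (continuous_apply i)).pow 2)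

lemma quad_re {z : Fin m → ℂ} (hz : ∑ i, z i ^ 2 = 1) : A z = 1 + B z := by
  have h1 : (∑ i, z i ^ 2).re = 1 := by rw [hz]; simp
  rw [Complex.re_sum] at h1
  simp only [pow_two, Complex.mul_re] at h1
  have : ∑ i, ((z i).re ^ 2 - (z i).im ^ 2) = 1 := by
    rw [← h1]; apply Finset.sum_congr rfl; intros; ring
  rw [Finset.sum_sub_distrib] at this
  unfold A B; linarith

lemma quad_im {z : Fin m → ℂ} (hz : ∑ i, z i ^ 2 = 1) :
    ∑ i, (z i).re * (z i).im = 0 := by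
  have h2 : (∑ i, z i ^ 2).im = 0 := by rw [hz]; simp
  rw [Complex.im_sum] at h2
  simp only [pow_two, Complex.mul_im] at h2
  have : ∑ i, (2 * ((z i).re * (z i).im)) = 0 := by
    rw [← h2]; apply Finset.sum_congr rfl; intros; ring
  rw [← Finset.mul_sum] at this
  linarith

lemma A_pos {z : Fin m → ℂ} (hz : ∑ i, z i ^ 2 = 1) : 0 < A z := by
  rw [quad_re hz]; linarith [B_nonneg z]

/-- sphere membership criterion -/
lemma mem_sphere_iff (x : EuclideanSpace ℝ (Fin m)) :
    ‖x‖ = 1 ↔ ∑ i, x i ^ 2 = 1 := by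
  rw [EuclideanSpace.norm_eq]
  simp only [Real.norm_eq_abs, sq_abs]
  constructor
  · intro h
    have := congrArg (· ^ 2) h
    simpa [Real.sq_sqrt (Finset.sum_nonneg fun i _ => sq_nonneg (x i))] using this
  · intro h; rw [h, Real.sqrt_one]

lemma mem_Sph' {x : EuclideanSpace ℝ (Fin m)} :
    x ∈ ({x : EuclideanSpace ℝ (Fin m) | ‖x‖ = 1}) ↔ ∑ i, x i ^ 2 = 1 := mem_sphere_iff x

def Q1 (m : ℕ) : Set (Fin m → ℂ) := {z | ∑ i, z i ^ 2 = 1}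
def Sph (m : ℕ) : Set (EuclideanSpace ℝ (Fin m)) := {x | ‖x‖ = 1}

/-- the retraction Q₁ → S^{m-1} -/
def fQ (m : ℕ) : C(Q1 m, Sph m) where
  toFun z := ⟨(WithLp.toLp 2 (fun i => (z.1 i).re / Real.sqrt (A z.1)) : EuclideanSpace ℝ (Fin m)), by
    have hz := z.2
    have hA : 0 < A z.1 := A_pos hz
    rw [Sph, mem_Sph']
    simp only [PiLp.toLp_apply]
    have : ∀ i, ((z.1 i).re / Real.sqrt (A z.1)) ^ 2 = (z.1 i).re ^ 2 / A z.1 := by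
      intro i; rw [div_pow, Real.sq_sqrt hA.le]
    simp_rw [this]
    rw [← Finset.sum_div]
    exact div_self (ne_of_gt hA)⟩
  continuous_toFun := by
    apply Continuous.subtype_mk
    apply (PiLp.continuous_toLp _ _).comp
    apply continuous_pi
    intro i
    exact ((Complex.continuous_re.comp ((continuous_apply i).comp continuous_subtype_val)).div
      ((Real.continuous_sqrt.comp (continuous_A.comp continuous_subtype_val)))
      (fun z => ne_of_gt (Real.sqrt_pos.2 (A_pos z.2))))

/-- the inclusion S^{m-1} → Q₁ -/
def gQ (m : ℕ) : C(Sph m, Q1 m) where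
  toFun x := ⟨fun i => ((x.1 i : ℝ) : ℂ), by
    have hx : ∑ i, x.1 i ^ 2 = 1 := (mem_sphere_iff x.1).1 x.2
    show ∑ i, ((x.1 i : ℝ) : ℂ) ^ 2 = 1
    exact_mod_cast congrArg (fun r : ℝ => (r : ℂ)) hx⟩
  continuous_toFun := by
    apply Continuous.subtype_mk
    apply continuous_pi
    intro i
    exact Complex.continuous_ofReal.comp ((continuous_apply i).comp ((PiLp.continuous_ofLp 2 _).comp continuous_subtype_val))

lemma fg_id : (fQ m).comp (gQ m) = ContinuousMap.id _ := by
  ext x i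
  simp only [ContinuousMap.comp_apply, fQ, gQ, ContinuousMap.coe_mk, ContinuousMap.id_apply]
  have hx : ∑ j, x.1 j ^ 2 = 1 := (mem_sphere_iff x.1).1 x.2
  have hA : A (fun j => ((x.1 j : ℝ) : ℂ)) = 1 := by
    unfold A; simpa using hx
  simp [hA]

end Stmt7Aux

end Stmt7Aux

noncomputable section

namespace Stmt7Aux

variable {m : ℕ}

lemma one_add_B_pos (z : Fin m → ℂ) : 0 < 1 + B z := by linarith [B_nonneg z]

def sFun (t : ℝ) (z : Fin m → ℂ) : ℝ :=
  Real.sqrt ((1 + (1 - t) ^ 2 * B z) / (1 + B z))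

lemma sFun_num_nonneg (t : ℝ) (z : Fin m → ℂ) : 0 ≤ 1 + (1 - t) ^ 2 * B z := by
  have := mul_nonneg (sq_nonneg (1 - t)) (B_nonneg z); linarith

lemma sFun_sq (t : ℝ) (z : Fin m → ℂ) :
    sFun t z ^ 2 = (1 + (1 - t) ^ 2 * B z) / (1 + B z) :=
  Real.sq_sqrt (div_nonneg (sFun_num_nonneg t z) (one_add_B_pos z).le)

lemma re_sq (x y : ℝ) : (((x : ℂ) + (y : ℂ) * Complex.I) ^ 2).re = x ^ 2 - y ^ 2 := by
  simp [pow_two, Complex.mul_re, Complex.mul_im]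

lemma im_sq (x y : ℝ) : (((x : ℂ) + (y : ℂ) * Complex.I) ^ 2).im = 2 * (x * y) := by
  simp [pow_two, Complex.mul_re, Complex.mul_im]; ring

open unitInterval in
/-- the deformation retraction -/
def Hmap (m : ℕ) : C(I × Q1 m, Q1 m) where
  toFun p :=
    ⟨fun i => ((sFun (p.1 : ℝ) p.2.1 * (p.2.1 i).re : ℝ) : ℂ) +
        (((1 - (p.1 : ℝ)) * (p.2.1 i).im : ℝ) : ℂ) * Complex.I, by
      set t : ℝ := (p.1 : ℝ) with ht
      set z := p.2.1 with hzdef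
      have hz : ∑ i, z i ^ 2 = 1 := p.2.2
      set s : ℝ := sFun t z with hs
      show ∑ i, (((s * (z i).re : ℝ) : ℂ) + (((1 - t) * (z i).im : ℝ) : ℂ) * Complex.I) ^ 2 = 1
      apply Complex.ext
      · rw [Complex.re_sum]
        simp only [re_sq]
        have h1 : ∑ i, ((s * (z i).re) ^ 2 - ((1 - t) * (z i).im) ^ 2)
            = s ^ 2 * A z - (1 - t) ^ 2 * B z := by
          rw [Finset.sum_sub_distrib]
          unfold A B
          rw [Finset.mul_sum, Finset.mul_sum]
          congr 1 <;> exact Finset.sum_congr rfl fun i _ => by ring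
        rw [h1, quad_re hz, sFun_sq]
        have hB := one_add_B_pos z
        field_simp
        simp
      · rw [Complex.im_sum]
        simp only [im_sq]
        have h2 : ∑ i, (2 * ((s * (z i).re) * ((1 - t) * (z i).im)))
            = 2 * s * (1 - t) * ∑ i, (z i).re * (z i).im := by
          rw [Finset.mul_sum]
          exact Finset.sum_congr rfl fun i _ => by ring
        have h3 : ∀ i, 2 * ((s * (z i).re) * ((1 - t) * (z i).im))
            = 2 * s * (1 - t) * ((z i).re * (z i).im) := fun i => by ring
        simp only [h3]
        rw [← Finset.mul_sum, quad_im hz]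
        simp⟩
  continuous_toFun := by
    have ct : Continuous fun p : I × Q1 m => (p.1 : ℝ) :=
      continuous_subtype_val.comp continuous_fst
    have cz : Continuous fun p : I × Q1 m => (p.2.1 : Fin m → ℂ) :=
      continuous_subtype_val.comp continuous_snd
    have cB : Continuous fun p : I × Q1 m => B p.2.1 := continuous_B.comp cz
    have cs : Continuous fun p : I × Q1 m => sFun (p.1 : ℝ) p.2.1 := by
      apply Real.continuous_sqrt.comp
      apply Continuous.div
      · exact continuous_const.add (((continuous_const.sub ct).pow 2).mul cB)
      · exact continuous_const.add cB
      · exact fun p => ne_of_gt (one_add_B_pos p.2.1)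
    apply Continuous.subtype_mk
    apply continuous_pi
    intro i
    have ca : Continuous fun p : I × Q1 m => (p.2.1 i).re :=
      Complex.continuous_re.comp ((continuous_apply i).comp cz)
    have cb : Continuous fun p : I × Q1 m => (p.2.1 i).im :=
      Complex.continuous_im.comp ((continuous_apply i).comp cz)
    exact (Complex.continuous_ofReal.comp (cs.mul ca)).add
      ((Complex.continuous_ofReal.comp ((continuous_const.sub ct).mul cb)).mul continuous_const)

open unitInterval in
lemma Hmap_zero (x : Q1 m) : Hmap m (0, x) = x := by
  apply Subtype.ext
  funext i
  show ((sFun ((0 : I) : ℝ) x.1 * (x.1 i).re : ℝ) : ℂ) +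
      (((1 - ((0 : I) : ℝ)) * (x.1 i).im : ℝ) : ℂ) * Complex.I = x.1 i
  have h0 : ((0 : I) : ℝ) = 0 := rfl
  have hs : sFun 0 x.1 = 1 := by
    unfold sFun
    rw [show (1 - (0:ℝ)) ^ 2 * B x.1 = B x.1 by ring, div_self (ne_of_gt (one_add_B_pos x.1)),
      Real.sqrt_one]
  rw [h0, hs]
  simp [Complex.re_add_im]

open unitInterval in
lemma Hmap_one (x : Q1 m) : Hmap m (1, x) = (gQ m).comp (fQ m) x := by
  apply Subtype.ext
  funext i
  show ((sFun ((1 : I) : ℝ) x.1 * (x.1 i).re : ℝ) : ℂ) +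
      (((1 - ((1 : I) : ℝ)) * (x.1 i).im : ℝ) : ℂ) * Complex.I
      = (((x.1 i).re / Real.sqrt (A x.1) : ℝ) : ℂ)
  have h1 : ((1 : I) : ℝ) = 1 := rfl
  have hz : ∑ j, x.1 j ^ 2 = 1 := x.2
  have hs : sFun 1 x.1 = (Real.sqrt (A x.1))⁻¹ := by
    unfold sFun
    rw [show (1 - (1:ℝ)) ^ 2 * B x.1 = 0 by ring, add_zero, ← quad_re hz, one_div,
      Real.sqrt_inv]
  rw [h1, hs]
  push_cast
  rw [div_eq_mul_inv]
  ring

def he1 (m : ℕ) : ContinuousMap.HomotopyEquiv (Q1 m) (Sph m) where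
  toFun := fQ m
  invFun := gQ m
  left_inv := ⟨(ContinuousMap.Homotopy.mk (Hmap m) Hmap_zero Hmap_one).symm⟩
  right_inv := by rw [fg_id]

end Stmt7Aux

noncomputable section

namespace Stmt7Aux

variable {m : ℕ}

/-- scaling homeomorphism from `Q_1` to `Q_l` -/
def scaleHomeo (l : ℂ) (c : ℂ) (hc : c ≠ 0) (hc2 : c ^ 2 = l) :
    Q1 m ≃ₜ ({z : Fin m → ℂ | ∑ i, z i ^ 2 = l} : Set (Fin m → ℂ)) where
  toFun z := ⟨fun i => c * z.1 i, by
    show ∑ i, (c * z.1 i) ^ 2 = l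
    have hz : ∑ i, z.1 i ^ 2 = 1 := z.2
    simp_rw [mul_pow, ← Finset.mul_sum, hz, mul_one, hc2]⟩
  invFun w := ⟨fun i => c⁻¹ * w.1 i, by
    show ∑ i, (c⁻¹ * w.1 i) ^ 2 = 1
    have hw : ∑ i, w.1 i ^ 2 = l := w.2
    simp_rw [mul_pow, ← Finset.mul_sum, hw, ← hc2]
    field_simp⟩
  left_inv z := by
    apply Subtype.ext; funext i
    show c⁻¹ * (c * z.1 i) = z.1 i
    field_simp
  right_inv w := by
    apply Subtype.ext; funext i
    show c * (c⁻¹ * w.1 i) = w.1 i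
    field_simp
  continuous_toFun := by
    apply Continuous.subtype_mk
    exact continuous_pi fun i =>
      continuous_const.mul ((continuous_apply i).comp continuous_subtype_val)
  continuous_invFun := by
    apply Continuous.subtype_mk
    exact continuous_pi fun i =>
      continuous_const.mul ((continuous_apply i).comp continuous_subtype_val)

end Stmt7Aux

end

/-- §5.1.5 / §5.1.8: for `λ ≠ 0` the nonsingular complex quadric
`Q_λ = {z ∈ ℂ^m : ∑ z_i² = λ}` is homotopy equivalent to the unit sphere
`S^{m−1} = {x ∈ ℝ^m : ‖x‖ = 1}`. -/
theorem stmt7 (m : ℕ) (hm : 1 ≤ m) (l : ℂ) (hl : l ≠ 0) :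
    Nonempty
      (ContinuousMap.HomotopyEquiv
        ({z : Fin m → ℂ | ∑ i, z i ^ 2 = l} : Set (Fin m → ℂ))
        ({x : EuclideanSpace ℝ (Fin m) | ‖x‖ = 1} : Set (EuclideanSpace ℝ (Fin m)))) := by
  obtain ⟨c, hc2⟩ := IsAlgClosed.exists_pow_nat_eq l (n := 2) (by norm_num)
  have hc : c ≠ 0 := fun h => hl (by rw [← hc2, h]; ring)
  exact ⟨((Stmt7Aux.scaleHomeo l c hc hc2).symm.toHomotopyEquiv).trans (Stmt7Aux.he1 m)⟩
end
end

section
/- Let m ≥ 1 and let λ be a real number with λ > 0. Then the set Δ_λ of real points of the complex quadric, Δ_λ = {z ∈ Fin m → ℂ : ∑_i z_i² = λ and Im(z_i) = 0 for all i}, with the subspace topology, is homeomorphic to the unit sphere {x ∈ EuclideanSpace ℝ (Fin m) : ‖x‖ = 1}, and moreover Δ_λ is homotopy equivalent to the full fibre Q_λ = {z ∈ Fin m → ℂ : ∑_i z_i² = λ}. -/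
open Finset in
lemma quad_re_im {m : ℕ} (z : Fin m → ℂ) (l : ℝ)
    (h : ∑ i, z i ^ 2 = (l : ℂ)) :
    (∑ i, (z i).re ^ 2) = l + ∑ i, (z i).im ^ 2 ∧ (∑ i, (z i).re * (z i).im) = 0 := by
  have hre := congrArg Complex.re h
  have him := congrArg Complex.im h
  simp only [Complex.re_sum, Complex.im_sum, pow_two, Complex.mul_re, Complex.mul_im,
    Complex.ofReal_re, Complex.ofReal_im, Finset.sum_sub_distrib] at hre him
  constructor
  · have h1 : ∑ i, (z i).re * (z i).re = ∑ i, (z i).re ^2 := by simp [pow_two]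
    have h2 : ∑ i, (z i).im * (z i).im = ∑ i, (z i).im ^2 := by simp [pow_two]
    rw [h1, h2] at hre; linarith
  · have : ∑ i, ((z i).re * (z i).im + (z i).im * (z i).re) = ∑ i, 2 * ((z i).re * (z i).im) := by
      apply Finset.sum_congr rfl; intro i _; ring
    rw [this, ← Finset.mul_sum] at him
    linarith

noncomputable def phiC (m : ℕ) (l : ℝ) (s : ℝ) (z : Fin m → ℂ) : ℝ :=
  Real.sqrt ((l + s ^ 2 * ∑ i, (z i).im ^ 2) / ∑ i, (z i).re ^ 2)

noncomputable def phi (m : ℕ) (l : ℝ) (s : ℝ) (z : Fin m → ℂ) : Fin m → ℂ :=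
  fun i => (((z i).re * phiC m l s z : ℝ) : ℂ) + ((s * (z i).im : ℝ) : ℂ) * Complex.I

lemma term_sq (a b : ℝ) : ((a:ℂ) + (b:ℂ) * Complex.I) ^ 2
    = ((a^2 - b^2 : ℝ) : ℂ) + ((2*(a*b) : ℝ) : ℂ) * Complex.I := by
  have : (Complex.I)^2 = -1 := Complex.I_sq
  push_cast
  ring_nf
  rw [Complex.I_sq]
  ring

lemma phi_mem {m : ℕ} {l : ℝ} (hl : 0 < l) (s : ℝ) (z : Fin m → ℂ)
    (hz : ∑ i, z i ^ 2 = (l : ℂ)) : ∑ i, phi m l s z i ^ 2 = (l : ℂ) := by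
  obtain ⟨hx, hp⟩ := quad_re_im z l hz
  set Sy := ∑ i, (z i).im ^ 2 with hSy
  have hSypos : 0 ≤ Sy := Finset.sum_nonneg fun i _ => sq_nonneg _
  have hden : (0:ℝ) < l + Sy := by linarith
  have hnum : (0:ℝ) ≤ l + s^2 * Sy := by positivity
  have hc2 : (phiC m l s z) ^ 2 = (l + s^2 * Sy) / (l + Sy) := by
    rw [phiC, Real.sq_sqrt (by rw [hx]; positivity), hx]
  have hX : ∑ i, (((z i).re * phiC m l s z)^2 - (s*(z i).im)^2) = l := by
    simp_rw [mul_pow, Finset.sum_sub_distrib, ← Finset.sum_mul, ← Finset.mul_sum]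
    rw [hx, hc2]
    field_simp
    rw [← hSy]; ring
  have hY : ∑ i, (2 * (((z i).re * phiC m l s z) * (s*(z i).im))) = 0 := by
    have : ∀ i, 2 * (((z i).re * phiC m l s z) * (s*(z i).im))
        = (2 * phiC m l s z * s) * ((z i).re * (z i).im) := fun i => by ring
    simp_rw [this, ← Finset.mul_sum, hp, mul_zero]
  calc ∑ i, phi m l s z i ^ 2
      = ∑ i, ((((((z i).re * phiC m l s z)^2 - (s*(z i).im)^2 : ℝ)) : ℂ)
          + ((2*(((z i).re * phiC m l s z)*(s*(z i).im)) : ℝ) : ℂ) * Complex.I) := by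
        apply Finset.sum_congr rfl; intro i _; exact term_sq _ _
    _ = ((∑ i, (((z i).re * phiC m l s z)^2 - (s*(z i).im)^2) : ℝ) : ℂ)
          + ((∑ i, 2*(((z i).re * phiC m l s z)*(s*(z i).im)) : ℝ) : ℂ) * Complex.I := by
        rw [Finset.sum_add_distrib, ← Finset.sum_mul]
        push_cast
        ring
    _ = (l : ℂ) := by rw [hX, hY]; simp

lemma phi_one {m : ℕ} {l : ℝ} (hl : 0 < l) (z : Fin m → ℂ)
    (hz : ∑ i, z i ^ 2 = (l : ℂ)) : phi m l 1 z = z := by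
  obtain ⟨hx, hp⟩ := quad_re_im z l hz
  have hSypos : 0 ≤ ∑ i, (z i).im ^ 2 := Finset.sum_nonneg fun i _ => sq_nonneg _
  have hden : (0:ℝ) < l + ∑ i, (z i).im ^ 2 := by linarith
  have hc : phiC m l 1 z = 1 := by
    rw [phiC, hx, one_pow, one_mul, div_self hden.ne', Real.sqrt_one]
  funext i
  apply Complex.ext <;> simp [phi, hc]

lemma phi_zero_of_real {m : ℕ} {l : ℝ} (hl : 0 < l) (z : Fin m → ℂ)
    (hz : ∑ i, z i ^ 2 = (l : ℂ)) (him : ∀ i, (z i).im = 0) : phi m l 0 z = z := by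
  obtain ⟨hx, hp⟩ := quad_re_im z l hz
  have hSy : ∑ i, (z i).im ^ 2 = 0 := by simp [him]
  have hc : phiC m l 0 z = 1 := by
    rw [phiC, hx, hSy]
    simp [div_self hl.ne']
  funext i
  apply Complex.ext <;> simp [phi, hc, him i]

lemma phi_im {m : ℕ} (l : ℝ) (z : Fin m → ℂ) (i : Fin m) : (phi m l 0 z i).im = 0 := by
  simp [phi]

lemma phi_cont {m : ℕ} {l : ℝ} (hl : 0 < l) :
    Continuous (fun p : ℝ × ({z : Fin m → ℂ | ∑ i, z i ^ 2 = (l : ℂ)} : Set (Fin m → ℂ)) =>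
      phi m l p.1 p.2.1) := by
  have hSx : Continuous fun (z : Fin m → ℂ) => ∑ i, (z i).re ^ 2 :=
    continuous_finset_sum _ fun i _ => (Complex.continuous_re.comp (continuous_apply i)).pow 2
  have hSy : Continuous fun (z : Fin m → ℂ) => ∑ i, (z i).im ^ 2 :=
    continuous_finset_sum _ fun i _ => (Complex.continuous_im.comp (continuous_apply i)).pow 2
  have hne : ∀ p : ℝ × ({z : Fin m → ℂ | ∑ i, z i ^ 2 = (l : ℂ)} : Set (Fin m → ℂ)),
      (∑ i, ((p.2.1) i).re ^ 2) ≠ 0 := by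
    intro p
    obtain ⟨hx, -⟩ := quad_re_im p.2.1 l p.2.2
    have : (0:ℝ) ≤ ∑ i, ((p.2.1) i).im ^ 2 := Finset.sum_nonneg fun i _ => sq_nonneg _
    rw [hx]; positivity
  have hval : Continuous fun p : ℝ × ({z : Fin m → ℂ | ∑ i, z i ^ 2 = (l : ℂ)} : Set (Fin m → ℂ)) =>
      p.2.1 := continuous_subtype_val.comp continuous_snd
  have hcC : Continuous fun p : ℝ × ({z : Fin m → ℂ | ∑ i, z i ^ 2 = (l : ℂ)} : Set (Fin m → ℂ)) =>
      phiC m l p.1 p.2.1 := by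
    apply Real.continuous_sqrt.comp
    exact ((continuous_const.add ((continuous_fst.pow 2).mul (hSy.comp hval))).div
      (hSx.comp hval) hne)
  apply continuous_pi
  intro i
  apply Continuous.add
  · exact Complex.continuous_ofReal.comp
      (((Complex.continuous_re.comp ((continuous_apply i).comp hval))).mul hcC)
  · exact (Complex.continuous_ofReal.comp
      (continuous_fst.mul (Complex.continuous_im.comp ((continuous_apply i).comp hval)))).mul
      continuous_const


noncomputable def inclDQ (m : ℕ) (l : ℝ) :
    C(({z : Fin m → ℂ | ∑ i, z i ^ 2 = (l : ℂ) ∧ ∀ i, (z i).im = 0} : Set (Fin m → ℂ)),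
      ({z : Fin m → ℂ | ∑ i, z i ^ 2 = (l : ℂ)} : Set (Fin m → ℂ))) :=
  ⟨fun z => ⟨z.1, z.2.1⟩, Continuous.subtype_mk continuous_subtype_val _⟩

noncomputable def retrQD (m : ℕ) (l : ℝ) (hl : 0 < l) :
    C(({z : Fin m → ℂ | ∑ i, z i ^ 2 = (l : ℂ)} : Set (Fin m → ℂ)),
      ({z : Fin m → ℂ | ∑ i, z i ^ 2 = (l : ℂ) ∧ ∀ i, (z i).im = 0} : Set (Fin m → ℂ))) :=
  ⟨fun z => ⟨phi m l 0 z.1, phi_mem hl 0 z.1 z.2, phi_im l z.1⟩,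
    Continuous.subtype_mk ((phi_cont hl).comp (continuous_const.prodMk continuous_id)) _⟩

noncomputable def htpyPart (m : ℕ) (l : ℝ) (hl : 0 < l) :
    ContinuousMap.HomotopyEquiv
      ({z : Fin m → ℂ | ∑ i, z i ^ 2 = (l : ℂ) ∧ ∀ i, (z i).im = 0} : Set (Fin m → ℂ))
      ({z : Fin m → ℂ | ∑ i, z i ^ 2 = (l : ℂ)} : Set (Fin m → ℂ)) where
  toFun := inclDQ m l
  invFun := retrQD m l hl
  left_inv := by
    have : (retrQD m l hl).comp (inclDQ m l) = ContinuousMap.id _ := by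
      ext z : 1
      exact Subtype.ext (show phi m l 0 z.1 = z.1 from phi_zero_of_real hl z.1 z.2.1 z.2.2)
    rw [this]
  right_inv := by
    refine ⟨⟨⟨fun p => ⟨phi m l (p.1 : ℝ) p.2.1, phi_mem hl _ _ p.2.2⟩, ?_⟩, ?_, ?_⟩⟩
    · exact Continuous.subtype_mk
        ((phi_cont hl).comp ((continuous_subtype_val.comp continuous_fst).prodMk continuous_snd))
        _
    · intro z
      exact Subtype.ext rfl
    · intro z
      exact Subtype.ext (phi_one hl z.1 z.2)

lemma eucl_norm_one_iff {m : ℕ} (x : EuclideanSpace ℝ (Fin m)) :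
    ‖x‖ = 1 ↔ ∑ i, x i ^ 2 = 1 := by
  rw [EuclideanSpace.norm_eq]
  have hn : ∀ i, ‖x i‖ ^ 2 = x i ^ 2 := fun i => by rw [Real.norm_eq_abs, sq_abs]
  simp_rw [hn]
  constructor
  · intro h
    have := congrArg (· ^ 2) h
    simpa [Real.sq_sqrt (Finset.sum_nonneg fun i _ => sq_nonneg (x i))] using this
  · intro h; rw [h, Real.sqrt_one]

noncomputable def homeoPart (m : ℕ) (l : ℝ) (hl : 0 < l) :
    ({z : Fin m → ℂ | ∑ i, z i ^ 2 = (l : ℂ) ∧ ∀ i, (z i).im = 0} :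
        Set (Fin m → ℂ)) ≃ₜ
      ({x : EuclideanSpace ℝ (Fin m) | ‖x‖ = 1} : Set (EuclideanSpace ℝ (Fin m))) where
  toFun z := ⟨(WithLp.equiv 2 _).symm (fun i => (z.1 i).re / Real.sqrt l), by
    obtain ⟨hz, him⟩ := z.2
    have h := (quad_re_im _ l hz).1
    simp only [him] at h
    simp only [Set.mem_setOf_eq, eucl_norm_one_iff]
    have hl' : Real.sqrt l ≠ 0 := by positivity
    have : ∀ i, ((WithLp.equiv 2 (Fin m → ℝ)).symm (fun i => (z.1 i).re / Real.sqrt l)) i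
        = (z.1 i).re / Real.sqrt l := fun i => rfl
    simp_rw [this, div_pow, ← Finset.sum_div, Real.sq_sqrt hl.le]
    rw [h]; simp [hl.ne']⟩
  invFun x := ⟨fun i => ((Real.sqrt l * x.1 i : ℝ) : ℂ), by
    have hx := (eucl_norm_one_iff x.1).1 x.2
    constructor
    · have : ∀ i, ((Real.sqrt l * x.1 i : ℝ) : ℂ) ^ 2 = ((l * x.1 i ^ 2 : ℝ) : ℂ) := by
        intro i
        push_cast
        rw [mul_pow]
        norm_cast
        rw [Real.sq_sqrt hl.le]
      simp_rw [this, ← Complex.ofReal_sum, ← Finset.mul_sum, hx, mul_one]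
    · intro i; simp⟩
  left_inv z := by
    ext i
    obtain ⟨hz, him⟩ := z.2
    have hl' : Real.sqrt l ≠ 0 := by positivity
    apply Complex.ext
    · simp [mul_div_cancel₀, hl', WithLp.equiv_symm_apply, PiLp.toLp_apply, mul_div_cancel₀ _ hl']
    · simp [him i]
  right_inv x := by
    ext i
    have hl' : Real.sqrt l ≠ 0 := by positivity
    simp [WithLp.equiv_symm_apply, PiLp.toLp_apply, mul_div_cancel_left₀ _ hl']
  continuous_toFun := by
    apply Continuous.subtype_mk
    exact (PiLp.continuous_toLp 2 _).comp (continuous_pi fun i =>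
      ((Complex.continuous_re.comp ((continuous_apply i).comp continuous_subtype_val)).div_const _))
  continuous_invFun := by
    apply Continuous.subtype_mk
    exact continuous_pi fun i => Complex.continuous_ofReal.comp
      (continuous_const.mul ((continuous_apply i).comp ((PiLp.continuous_ofLp 2 _).comp continuous_subtype_val)))

/-- §5.1.5: for real `λ > 0`, the vanishing cycle, i.e. the set of real points
`Δ_λ = {z ∈ ℂ^m : ∑ z_i² = λ, Im z_i = 0}` of the quadric, is homeomorphic to the
unit sphere `S^{m−1}`, and `Δ_λ` is homotopy equivalent to the full nonsingular
fibre `Q_λ`. -/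
theorem stmt8 (m : ℕ) (hm : 1 ≤ m) (l : ℝ) (hl : 0 < l) :
    Nonempty
      (({z : Fin m → ℂ | ∑ i, z i ^ 2 = (l : ℂ) ∧ ∀ i, (z i).im = 0} :
          Set (Fin m → ℂ)) ≃ₜ
        ({x : EuclideanSpace ℝ (Fin m) | ‖x‖ = 1} : Set (EuclideanSpace ℝ (Fin m)))) ∧
      Nonempty
        (ContinuousMap.HomotopyEquiv
          ({z : Fin m → ℂ | ∑ i, z i ^ 2 = (l : ℂ) ∧ ∀ i, (z i).im = 0} :
            Set (Fin m → ℂ))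
          ({z : Fin m → ℂ | ∑ i, z i ^ 2 = (l : ℂ)} : Set (Fin m → ℂ))) := by
  exact ⟨⟨homeoPart m l hl⟩, ⟨htpyPart m l hl⟩⟩
end
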